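/- Let X ⊆ 2^ω be countable. Then there exists an injection φ : X → ℚ such that for all distinct x, y ∈ X, split(φ(x), φ(y)) = split(x, y). -/

import Mathlib

/-- `ℚ ⊆ 2^ω`: the set of eventually-zero binary sequences. -/
def QSet : Set (ℕ → Bool) := {x | ∀ᶠ n in Filter.atTop, x n = false}

/-- The least coordinate at which `x` and `y` differ. -/
noncomputable def splitPt (x y : ℕ → Bool) : ℕ := sInf {n | x n ≠ y n}

lemma splitPt_apply_ne {x y : ℕ → Bool} (h : x ≠ y) :
    x (splitPt x y) ≠ y (splitPt x y) :=
  Nat.sInf_mem (Function.ne_iff.mp h)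

lemma splitPt_agree {x y : ℕ → Bool} {n : ℕ} (h : n < splitPt x y) : x n = y n := by
  by_contra hc
  exact absurd (Nat.sInf_le hc) (not_le.mpr h)

lemma splitPt_comm (x y : ℕ → Bool) : splitPt x y = splitPt y x := by
  unfold splitPt; congr 1; ext n; exact ne_comm

lemma splitPt_spec {x y : ℕ → Bool} {s : ℕ} (hlow : ∀ n < s, x n = y n)
    (hs : x s ≠ y s) : splitPt x y = s := by
  refine le_antisymm (Nat.sInf_le hs) (le_csInf ⟨s, hs⟩ ?_)
  intro m hm
  by_contra h
  exact hm (hlow m (not_le.mp h))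

open Classical in
lemma exists_max_split (f : ℕ → ℕ → Bool) (k : ℕ) (h : ∃ j, j < k ∧ f j ≠ f k) :
    ∃ j, (j < k ∧ f j ≠ f k) ∧
      ∀ i, i < k → f i ≠ f k → splitPt (f i) (f k) ≤ splitPt (f j) (f k) := by
  classical
  obtain ⟨j0, hj0, hfj0⟩ := h
  have hne : ((Finset.range k).filter (fun j => f j ≠ f k)).Nonempty :=
    ⟨j0, by simp [hj0, hfj0]⟩
  obtain ⟨b, hb, hmax⟩ := Finset.exists_max_image _ (fun j => splitPt (f j) (f k)) hne
  simp only [Finset.mem_filter, Finset.mem_range] at hb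
  refine ⟨b, hb, ?_⟩
  intro i hik hfi
  exact hmax i (by simp [hik, hfi])

open Classical in
noncomputable def gfun (f : ℕ → ℕ → Bool) : ℕ → ℕ → Bool
  | k =>
    if h : ∃ j, Nat.lt j k ∧ f j = f k then gfun f (Nat.find h)
    else if h2 : ∃ j, (Nat.lt j k ∧ f j ≠ f k) ∧
        ∀ i, Nat.lt i k → f i ≠ f k → splitPt (f i) (f k) ≤ splitPt (f j) (f k) then
      fun n =>
        if n < splitPt (f (Nat.find h2)) (f k) then gfun f (Nat.find h2) n
        else if n = splitPt (f (Nat.find h2)) (f k) then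
          !(gfun f (Nat.find h2) (splitPt (f (Nat.find h2)) (f k)))
        else false
    else fun _ => false
  termination_by k => k
  decreasing_by
  · exact (Nat.find_spec h).1
  · exact (Nat.find_spec h2).1.1
  · exact (Nat.find_spec h2).1.1

open Classical in
lemma gfun_eq (f : ℕ → ℕ → Bool) (k : ℕ) : gfun f k =
    if h : ∃ j, j < k ∧ f j = f k then gfun f (Nat.find h)
    else if h2 : ∃ j, (j < k ∧ f j ≠ f k) ∧
        ∀ i, i < k → f i ≠ f k → splitPt (f i) (f k) ≤ splitPt (f j) (f k) then
      fun n =>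
        if n < splitPt (f (Nat.find h2)) (f k) then gfun f (Nat.find h2) n
        else if n = splitPt (f (Nat.find h2)) (f k) then
          !(gfun f (Nat.find h2) (splitPt (f (Nat.find h2)) (f k)))
        else false
    else fun _ => false := by
  rw [gfun]; congr!

lemma gfun_mem_QSet (f : ℕ → ℕ → Bool) : ∀ k, gfun f k ∈ QSet := by
  intro k
  induction k using Nat.strong_induction_on with
  | _ k IH =>
    classical
    rw [gfun_eq]
    by_cases h : ∃ j, j < k ∧ f j = f k
    · rw [dif_pos h]; exact IH _ (Nat.find_spec h).1
    · rw [dif_neg h]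
      by_cases h2 : ∃ j, (j < k ∧ f j ≠ f k) ∧
          ∀ i, i < k → f i ≠ f k → splitPt (f i) (f k) ≤ splitPt (f j) (f k)
      · rw [dif_pos h2]
        refine Filter.eventually_atTop.mpr ⟨splitPt (f (Nat.find h2)) (f k) + 1, ?_⟩
        intro n hn
        have h1 : ¬ n < splitPt (f (Nat.find h2)) (f k) := by omega
        have h2' : n ≠ splitPt (f (Nat.find h2)) (f k) := by omega
        simp [h1, h2']
      · rw [dif_neg h2]
        exact Filter.Eventually.of_forall fun _ => rfl

/-- The key invariant. -/
lemma gfun_key (f : ℕ → ℕ → Bool) :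
    ∀ k, ∀ i, i < k →
      (f i = f k → gfun f i = gfun f k) ∧
      (f i ≠ f k →
        (∀ n, n < splitPt (f i) (f k) → gfun f i n = gfun f k n) ∧
        gfun f i (splitPt (f i) (f k)) ≠ gfun f k (splitPt (f i) (f k))) := by
  intro k
  induction k using Nat.strong_induction_on with
  | _ k IH =>
    classical
    -- symmetric version of IH for pairs both below k
    have pairIH : ∀ a b, a < k → b < k → a ≠ b →
        (f a = f b → gfun f a = gfun f b) ∧
        (f a ≠ f b →
          (∀ n, n < splitPt (f a) (f b) → gfun f a n = gfun f b n) ∧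
          gfun f a (splitPt (f a) (f b)) ≠ gfun f b (splitPt (f a) (f b))) := by
      intro a b hak hbk hab
      rcases lt_trichotomy a b with hlt | heq | hgt
      · exact IH b hbk a hlt
      · exact absurd heq hab
      · have H := IH a hak b hgt
        constructor
        · intro he; exact (H.1 he.symm).symm
        · intro hne
          have H2 := H.2 hne.symm
          rw [splitPt_comm (f b) (f a)] at H2
          exact ⟨fun n hn => (H2.1 n hn).symm, (H2.2).symm⟩
    intro i hik
    by_cases h : ∃ j, j < k ∧ f j = f k
    · -- repeated value case
      have hgk : gfun f k = gfun f (Nat.find h) := by rw [gfun_eq, dif_pos h]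
      obtain ⟨hj0k, hfj0⟩ := Nat.find_spec h
      set j0 := Nat.find h with hj0def
      rw [hgk, ← hfj0]
      rcases eq_or_ne i j0 with rfl | hij0
      · exact ⟨fun _ => rfl, fun hne => absurd rfl hne⟩
      · exact pairIH i j0 hik hj0k hij0
    · -- fresh value case
      have hfi : f i ≠ f k := fun he => h ⟨i, hik, he⟩
      have h2 : ∃ j, (j < k ∧ f j ≠ f k) ∧
          ∀ i, i < k → f i ≠ f k → splitPt (f i) (f k) ≤ splitPt (f j) (f k) :=
        exists_max_split f k ⟨i, hik, hfi⟩
      set j := Nat.find h2 with hjdef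
      obtain ⟨⟨hjk, hfj⟩, hmax⟩ := Nat.find_spec h2
      set s := splitPt (f j) (f k) with hsdef
      have hgk : gfun f k = fun n =>
          if n < s then gfun f j n else if n = s then !(gfun f j s) else false := by
        rw [gfun_eq, dif_neg h, dif_pos h2]
      refine ⟨fun he => absurd he hfi, fun _ => ?_⟩
      set si := splitPt (f i) (f k) with hsidef
      have hsile : si ≤ s := hmax i hik hfi
      rcases eq_or_ne i j with rfl | hij
      · -- i = j
        constructor
        · intro n hn
          rw [hgk]
          simp [if_pos (lt_of_lt_of_le hn hsile)]
        · rw [hgk]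
          simp only [lt_irrefl, if_false, if_neg (lt_irrefl s), if_pos rfl]
          simp [hsidef, hsdef]
      · rcases eq_or_ne (f i) (f j) with hfij | hfij
        · -- same value as j
          have hAij : gfun f i = gfun f j := (pairIH i j hik hjk hij).1 hfij
          have hsi_eq : si = s := by rw [hsidef, hsdef, hfij]
          constructor
          · intro n hn
            rw [hgk, hAij]
            simp [if_pos (hsi_eq ▸ hn)]
          · rw [hgk, hAij, hsi_eq]
            simp only [lt_irrefl, if_neg (lt_irrefl s), if_pos rfl]
            exact fun hc => by simp at hc
        · -- distinct from j
          have Hij := (pairIH i j hik hjk hij).2 hfij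
          have hik_ne : f i si ≠ f k si := splitPt_apply_ne hfi
          have hjk_ne : f j s ≠ f k s := splitPt_apply_ne hfj
          rcases lt_or_eq_of_le hsile with hlt | heqs
          · -- si < s
            have ht : splitPt (f i) (f j) = si := by
              refine splitPt_spec (fun n hn => ?_) ?_
              · rw [splitPt_agree (x := f i) (y := f k) hn,
                    ← splitPt_agree (x := f j) (y := f k) (lt_trans hn hlt)]
              · rw [← splitPt_agree (x := f j) (y := f k) hlt] at hik_ne
                exact hik_ne
            rw [ht] at Hij
            constructor
            · intro n hn
              rw [hgk]
              simp only [if_pos (lt_trans hn hlt)]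
              exact Hij.1 n hn
            · rw [hgk]
              simp only [if_pos hlt]
              exact Hij.2
          · -- si = s
            have hagree : ∀ n ≤ s, f i n = f j n := by
              intro n hn
              rcases lt_or_eq_of_le hn with hn | rfl
              · have hn' : n < si := by omega
                rw [splitPt_agree (x := f i) (y := f k) hn',
                    ← splitPt_agree (x := f j) (y := f k) hn]
              · rw [← heqs] at hjk_ne ⊢
                revert hik_ne hjk_ne
                cases f i si <;> cases f j si <;> cases f k si <;> simp
            have ht : s < splitPt (f i) (f j) := by
              by_contra hc
              exact splitPt_apply_ne hfij (hagree _ (not_lt.mp hc))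
            have hAagree : ∀ n ≤ s, gfun f i n = gfun f j n :=
              fun n hn => Hij.1 n (lt_of_le_of_lt hn ht)
            constructor
            · intro n hn
              have hn' : n < s := by omega
              rw [hgk]
              simp only [if_pos hn']
              exact hAagree n (le_of_lt hn')
            · rw [hgk, heqs]
              simp only [lt_irrefl, if_neg (lt_irrefl s), if_pos rfl]
              rw [hAagree s le_rfl]
              exact fun hc => by simp at hc

theorem stmt_12 (X : Set (ℕ → Bool)) (hX : X.Countable) :
    ∃ φ : (ℕ → Bool) → (ℕ → Bool), Set.InjOn φ X ∧ (∀ x ∈ X, φ x ∈ QSet) ∧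
      ∀ x ∈ X, ∀ y ∈ X, x ≠ y → splitPt (φ x) (φ y) = splitPt x y := by
  classical
  rcases X.eq_empty_or_nonempty with rfl | hne
  · exact ⟨fun _ _ => false, by simp [Set.InjOn], by simp, by simp⟩
  obtain ⟨f, hf⟩ := Set.Countable.exists_eq_range hX hne
  set φ : (ℕ → Bool) → (ℕ → Bool) := fun x =>
    if h : ∃ k, f k = x then gfun f (Nat.find h) else fun _ => false with hφ
  have hφx : ∀ x ∈ X, ∃ k, f k = x := by
    intro x hx
    rw [hf] at hx
    obtain ⟨k, hk⟩ := hx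
    exact ⟨k, hk⟩
  -- symmetric key
  have key : ∀ a b, f a ≠ f b →
      (∀ n, n < splitPt (f a) (f b) → gfun f a n = gfun f b n) ∧
      gfun f a (splitPt (f a) (f b)) ≠ gfun f b (splitPt (f a) (f b)) := by
    intro a b hab
    rcases lt_trichotomy a b with hlt | rfl | hgt
    · exact (gfun_key f b a hlt).2 hab
    · exact absurd rfl hab
    · have H := (gfun_key f a b hgt).2 hab.symm
      rw [splitPt_comm (f b) (f a)] at H
      exact ⟨fun n hn => (H.1 n hn).symm, H.2.symm⟩
  have main : ∀ x ∈ X, ∀ y ∈ X, x ≠ y →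
      splitPt (φ x) (φ y) = splitPt x y ∧ φ x ≠ φ y := by
    intro x hx y hy hxy
    have hex := hφx x hx
    have hey := hφx y hy
    have hfx : f (Nat.find hex) = x := Nat.find_spec hex
    have hfy : f (Nat.find hey) = y := Nat.find_spec hey
    have hφxv : φ x = gfun f (Nat.find hex) := by rw [hφ]; exact dif_pos hex
    have hφyv : φ y = gfun f (Nat.find hey) := by rw [hφ]; exact dif_pos hey
    have hfne : f (Nat.find hex) ≠ f (Nat.find hey) := by rw [hfx, hfy]; exact hxy
    have H := key _ _ hfne
    rw [hfx, hfy] at H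
    have hsplit : splitPt (φ x) (φ y) = splitPt x y := by
      rw [hφxv, hφyv]
      exact splitPt_spec H.1 H.2
    refine ⟨hsplit, ?_⟩
    rw [hφxv, hφyv]
    intro hc
    exact H.2 (congrFun hc _)
  refine ⟨φ, ?_, ?_, fun x hx y hy hxy => (main x hx y hy hxy).1⟩
  · intro x hx y hy hxy
    by_contra hne'
    exact (main x hx y hy hne').2 hxy
  · intro x hx
    have hex := hφx x hx
    have : φ x = gfun f (Nat.find hex) := by rw [hφ]; exact dif_pos hex
    rw [this]
    exact gfun_mem_QSet f _
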